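/- The matrix A with entries A_{ij} = C(n,i)·C(n,j) / ((2n+1)·C(2n,i+j)), 0 ≤ i,j ≤ n, is symmetric and positive definite. -/

import Mathlib

open intervalIntegral in
private lemma bgsp_beta_nat (b a : ℕ) : ∫ x in (0:ℝ)..1, x^a * (1-x)^b
    = (a.factorial * b.factorial : ℝ) / ((a+b+1).factorial) := by
  induction b generalizing a with
  | zero =>
    simp [integral_pow, Nat.factorial_succ]
    rw [eq_div_iff (by positivity)]
    field_simp
  | succ b IH =>
    have key : ∫ x in (0:ℝ)..1,
        ((a+1:ℝ) * (x^a * (1-x)^(b+1)) - (b+1:ℝ) * (x^(a+1) * (1-x)^b)) = 0 := by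
      have hd : ∀ x ∈ Set.uIcc (0:ℝ) 1, HasDerivAt (fun x : ℝ => x^(a+1) * (1-x)^(b+1))
          ((a+1:ℝ) * (x^a * (1-x)^(b+1)) - (b+1:ℝ) * (x^(a+1) * (1-x)^b)) x := by
        intro x _
        have h1 : HasDerivAt (fun x : ℝ => x^(a+1)) ((a+1:ℝ) * x^a) x := by
          simpa using hasDerivAt_pow (a+1) x
        have h2 : HasDerivAt (fun x : ℝ => (1-x)^(b+1)) (-((b+1:ℝ) * (1-x)^b)) x := by
          have := ((hasDerivAt_id x).const_sub 1).fun_pow (b+1)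
          simpa using this
        have := h1.fun_mul h2
        exact this.congr_deriv (by ring)
      have := integral_eq_sub_of_hasDerivAt hd
        ((by fun_prop : Continuous _).intervalIntegrable _ _)
      simpa using this
    have hsplit : ((a:ℝ)+1) * ∫ x in (0:ℝ)..1, x^a * (1-x)^(b+1)
        = ((b:ℝ)+1) * ∫ x in (0:ℝ)..1, x^(a+1) * (1-x)^b := by
      rw [← integral_const_mul, ← integral_const_mul]
      have := integral_sub (f := fun x : ℝ => (a+1:ℝ) * (x^a * (1-x)^(b+1)))
        (g := fun x : ℝ => (b+1:ℝ) * (x^(a+1) * (1-x)^b)) (μ := MeasureTheory.volume)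
        (a := 0) (b := 1) ((by fun_prop : Continuous _).intervalIntegrable _ _)
        ((by fun_prop : Continuous _).intervalIntegrable _ _)
      rw [key] at this
      linarith [this.symm]
    have ha1 : ((a:ℝ)+1) ≠ 0 := by positivity
    have : (∫ x in (0:ℝ)..1, x^a * (1-x)^(b+1))
        = ((b:ℝ)+1) * ((a+1).factorial * b.factorial / ((a+1+b+1).factorial)) / ((a:ℝ)+1) := by
      rw [← IH (a+1)]
      field_simp at hsplit ⊢
      linarith [hsplit]
    rw [this]
    have e1 : (a+1+b+1) = (a + (b+1) + 1) := by omega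
    rw [e1]
    rw [Nat.factorial_succ (a), Nat.factorial_succ b]
    push_cast
    field_simp

open intervalIntegral in
private lemma bgsp_entry (n : ℕ) (i j : Fin (n+1)) :
    ((n.choose i : ℝ) * (n.choose j : ℝ)) /
        ((2 * n + 1 : ℝ) * ((2 * n).choose ((i:ℕ) + (j:ℕ)) : ℝ))
    = ∫ t in (0:ℝ)..1,
        ((n.choose i : ℝ) * t^(i:ℕ) * (1-t)^(n-(i:ℕ))) *
        ((n.choose j : ℝ) * t^(j:ℕ) * (1-t)^(n-(j:ℕ))) := by
  have hi : (i:ℕ) ≤ n := Nat.lt_succ_iff.mp i.2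
  have hj : (j:ℕ) ≤ n := Nat.lt_succ_iff.mp j.2
  set k := (i:ℕ) + (j:ℕ) with hk
  have hkn : k ≤ 2 * n := by omega
  have hfun : (fun t : ℝ => ((n.choose i : ℝ) * t^(i:ℕ) * (1-t)^(n-(i:ℕ))) *
        ((n.choose j : ℝ) * t^(j:ℕ) * (1-t)^(n-(j:ℕ))))
      = fun t : ℝ => ((n.choose i : ℝ) * (n.choose j : ℝ)) * (t^k * (1-t)^(2*n-k)) := by
    funext t
    have e1 : t^(i:ℕ) * t^(j:ℕ) = t^k := by rw [hk, pow_add]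
    have e2 : (1-t)^(n-(i:ℕ)) * (1-t)^(n-(j:ℕ)) = (1-t)^(2*n-k) := by
      rw [← pow_add]; congr 1; omega
    calc ((n.choose i : ℝ) * t^(i:ℕ) * (1-t)^(n-(i:ℕ))) *
        ((n.choose j : ℝ) * t^(j:ℕ) * (1-t)^(n-(j:ℕ)))
        = ((n.choose i : ℝ) * (n.choose j : ℝ)) *
          ((t^(i:ℕ) * t^(j:ℕ)) * ((1-t)^(n-(i:ℕ)) * (1-t)^(n-(j:ℕ)))) := by ring
      _ = _ := by rw [e1, e2]
  rw [hfun, integral_const_mul, bgsp_beta_nat (2*n-k) k]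
  have hC : ((2*n).choose k : ℝ) ≠ 0 := by
    have := Nat.choose_pos hkn; positivity
  have hfac : ((2*n).choose k : ℝ) * ((k.factorial : ℝ) * ((2*n-k).factorial : ℝ))
      = ((2*n).factorial : ℝ) := by
    exact_mod_cast congrArg (Nat.cast (R := ℝ))
      (by rw [← mul_assoc]; exact Nat.choose_mul_factorial_mul_factorial hkn)
  have he : k + (2*n - k) + 1 = 2*n+1 := by omega
  rw [he]
  have hfs : ((2*n+1).factorial : ℝ) = (2*n+1) * ((2*n).factorial : ℝ) := by
    rw [Nat.factorial_succ]; push_cast; ring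
  rw [hfs]
  have h2n1 : (2*(n:ℝ)+1) ≠ 0 := by positivity
  have hfne : ((2*n).factorial : ℝ) ≠ 0 := by
    have := Nat.factorial_pos (2*n); positivity
  field_simp
  linear_combination (-((n.choose i : ℝ) * (n.choose j : ℝ))) * hfac

private lemma bgsp_exists_ne_zero (n : ℕ) (x : Fin (n+1) → ℝ) (hx : x ≠ 0) :
    ∃ t ∈ Set.Ioo (0:ℝ) 1,
      (∑ i : Fin (n+1), x i * (n.choose i) * t^(i:ℕ) * (1-t)^(n-(i:ℕ))) ≠ 0 := by
  by_contra h
  push_neg at h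
  set q : Polynomial ℝ := ∑ i : Fin (n+1), Polynomial.C (x i * (n.choose i)) * Polynomial.X^(i:ℕ)
    with hq
  have hroot : ∀ u : ℝ, 0 < u → q.IsRoot u := by
    intro u hu
    have h1u : (0:ℝ) < 1 + u := by linarith
    set t : ℝ := u / (1 + u) with htdef
    have ht0 : 0 < t := by positivity
    have ht1 : t < 1 := by
      rw [htdef, div_lt_one h1u]; linarith
    have hft := h t ⟨ht0, ht1⟩
    have hterm : ∀ i : Fin (n+1),
        (1+u)^n * (x i * (n.choose i) * t^(i:ℕ) * (1-t)^(n-(i:ℕ)))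
          = x i * (n.choose i) * u^(i:ℕ) := by
      intro i
      have hin : (i:ℕ) ≤ n := Nat.lt_succ_iff.mp i.2
      have hsplit : (1+u)^n = (1+u)^(i:ℕ) * (1+u)^(n-(i:ℕ)) := by
        rw [← pow_add]; congr 1; omega
      have e1 : (1+u) * t = u := by
        rw [htdef]; field_simp
      have e2 : (1+u) * (1-t) = 1 := by
        rw [htdef]; field_simp; ring
      calc (1+u)^n * (x i * (n.choose i) * t^(i:ℕ) * (1-t)^(n-(i:ℕ)))
          = x i * (n.choose i) * (((1+u)*t)^(i:ℕ) * ((1+u)*(1-t))^(n-(i:ℕ))) := by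
            rw [hsplit, mul_pow, mul_pow]; ring
        _ = x i * (n.choose i) * u^(i:ℕ) := by rw [e1, e2]; simp
    have hevalq : q.eval u = ∑ i : Fin (n+1), x i * (n.choose i) * u^(i:ℕ) := by
      simp [hq, Polynomial.eval_finset_sum]
    have : q.eval u = (1+u)^n * ∑ i : Fin (n+1),
        x i * (n.choose i) * t^(i:ℕ) * (1-t)^(n-(i:ℕ)) := by
      rw [hevalq, Finset.mul_sum]
      exact Finset.sum_congr rfl fun i _ => (hterm i).symm
    rw [Polynomial.IsRoot, this, hft, mul_zero]
  have hq0 : q = 0 := by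
    apply Polynomial.eq_zero_of_infinite_isRoot
    exact Set.Infinite.mono (fun u hu => hroot u hu) (Set.Ioi_infinite 0)
  apply hx
  funext i
  have hcoeff : q.coeff (i:ℕ) = x i * (n.choose i) := by
    rw [hq, Polynomial.finset_sum_coeff]
    rw [Finset.sum_eq_single i]
    · rw [Polynomial.coeff_C_mul, Polynomial.coeff_X_pow, if_pos rfl, mul_one]
    · intro j _ hji
      simp only [Polynomial.coeff_C_mul, Polynomial.coeff_X_pow]
      rw [if_neg (by simpa [Fin.val_eq_val] using hji.symm), mul_zero]
    · simp
  rw [hq0] at hcoeff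
  simp only [Polynomial.coeff_zero] at hcoeff
  have hchoose : (n.choose i : ℝ) ≠ 0 := by
    have := Nat.choose_pos (Nat.lt_succ_iff.mp i.2)
    positivity
  rcases mul_eq_zero.mp hcoeff.symm with h1 | h1
  · simpa using h1
  · exact absurd h1 hchoose

theorem bernstein_gram_symm_posDef (n : ℕ) :
    let A : Matrix (Fin (n + 1)) (Fin (n + 1)) ℝ := fun i j =>
      ((n.choose i : ℝ) * (n.choose j : ℝ)) /
        ((2 * n + 1 : ℝ) * ((2 * n).choose (i + j : ℕ) : ℝ))
    A.IsSymm ∧ A.PosDef := by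
  intro A
  have hsymm : A.IsSymm := by
    ext i j
    simp only [Matrix.transpose_apply, A]
    change ((n.choose j : ℝ) * (n.choose i : ℝ)) / ((2 * n + 1 : ℝ) * ((2 * n).choose ((j:ℕ) + (i:ℕ)) : ℝ)) = _
    rw [mul_comm ((n.choose j : ℝ)), Nat.add_comm (j:ℕ) (i:ℕ)]
  refine ⟨hsymm, Matrix.posDef_iff_dotProduct_mulVec.mpr ⟨?_, ?_⟩⟩
  · rw [Matrix.IsHermitian, Matrix.conjTranspose_eq_transpose_of_trivial]
    exact hsymm
  · intro x hx
    -- the Bernstein basis functions weighted by x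
    set g : Fin (n+1) → ℝ → ℝ :=
      fun i t => x i * ((n.choose i : ℝ) * t^(i:ℕ) * (1-t)^(n-(i:ℕ))) with hg
    have hgc : ∀ i : Fin (n+1), Continuous (g i) := by
      intro i; rw [hg]; fun_prop
    have hquad : dotProduct (star x) (A.mulVec x)
        = ∫ t in (0:ℝ)..1, (∑ i : Fin (n+1), g i t)^2 := by
      have hterm : ∀ i j : Fin (n+1), x i * (A i j * x j)
          = ∫ t in (0:ℝ)..1, g i t * g j t := by
        intro i j
        have h1 : (fun t : ℝ => g i t * g j t)
            = fun t : ℝ => (x i * x j) *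
              (((n.choose i : ℝ) * t^(i:ℕ) * (1-t)^(n-(i:ℕ))) *
               ((n.choose j : ℝ) * t^(j:ℕ) * (1-t)^(n-(j:ℕ)))) := by
          funext t; rw [hg]; ring
        rw [h1, intervalIntegral.integral_const_mul, ← bgsp_entry n i j]
        simp only [A]
        ring
      have hsq : ∀ t : ℝ, (∑ i : Fin (n+1), g i t)^2
          = ∑ i : Fin (n+1), ∑ j : Fin (n+1), g i t * g j t := by
        intro t
        rw [sq, Finset.sum_mul_sum]
      simp only [dotProduct, Matrix.mulVec, dotProduct, Pi.star_apply, star_trivial]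
      calc ∑ i : Fin (n+1), x i * (∑ j : Fin (n+1), A i j * x j)
          = ∑ i : Fin (n+1), ∑ j : Fin (n+1), x i * (A i j * x j) := by
            simp_rw [Finset.mul_sum]
        _ = ∑ i : Fin (n+1), ∑ j : Fin (n+1), ∫ t in (0:ℝ)..1, g i t * g j t := by
            exact Finset.sum_congr rfl fun i _ => Finset.sum_congr rfl fun j _ => hterm i j
        _ = ∑ i : Fin (n+1), ∫ t in (0:ℝ)..1, ∑ j : Fin (n+1), g i t * g j t := by
            refine Finset.sum_congr rfl fun i _ => ?_
            rw [intervalIntegral.integral_finset_sum]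
            intro j _
            exact (((hgc i).mul (hgc j))).intervalIntegrable _ _
        _ = ∫ t in (0:ℝ)..1, ∑ i : Fin (n+1), ∑ j : Fin (n+1), g i t * g j t := by
            rw [intervalIntegral.integral_finset_sum]
            intro i _
            exact (by fun_prop : Continuous fun t => ∑ j : Fin (n+1), g i t * g j t
              ).intervalIntegrable _ _
        _ = ∫ t in (0:ℝ)..1, (∑ i : Fin (n+1), g i t)^2 := by
            refine intervalIntegral.integral_congr fun t _ => (hsq t).symm
    rw [hquad]
    -- positivity of the integral
    obtain ⟨t₀, ht₀, hft₀⟩ := bgsp_exists_ne_zero n x hx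
    have hfc : Continuous fun t : ℝ => ∑ i : Fin (n+1), g i t := by fun_prop
    rw [intervalIntegral.integral_pos_iff_support_of_nonneg_ae
      (Filter.Eventually.of_forall fun t => sq_nonneg _)
      ((by fun_prop : Continuous fun t : ℝ => (∑ i : Fin (n+1), g i t)^2
        ).intervalIntegrable _ _)]
    refine ⟨one_pos, ?_⟩
    have hopen : IsOpen ({t : ℝ | (∑ i : Fin (n+1), g i t) ≠ 0} ∩ Set.Ioo 0 1) :=
      (isOpen_compl_iff.mpr (isClosed_singleton.preimage hfc)).inter isOpen_Ioo
    have hne : ({t : ℝ | (∑ i : Fin (n+1), g i t) ≠ 0} ∩ Set.Ioo 0 1).Nonempty := by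
      refine ⟨t₀, ?_, ht₀⟩
      simp only [Set.mem_setOf_eq, hg]
      convert hft₀ using 2 with i
      ring
    have hsub : ({t : ℝ | (∑ i : Fin (n+1), g i t) ≠ 0} ∩ Set.Ioo 0 1)
        ⊆ Function.support (fun t : ℝ => (∑ i : Fin (n+1), g i t)^2) ∩ Set.Ioc 0 1 := by
      rintro t ⟨ht1, ht2⟩
      exact ⟨pow_ne_zero _ ht1, Set.Ioo_subset_Ioc_self ht2⟩
    exact lt_of_lt_of_le (hopen.measure_pos _ hne) (MeasureTheory.measure_mono hsub)
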